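/- There exists a homeomorphism φ of the Cantor space {0,1}^ℕ = (ℕ → Bool) (with the product topology) which has a fixed point, whose set of periodic points is dense, and such that ({0,1}^ℕ, φ) is totally transitive. -/
import Mathlib


open Topology

namespace Stmt16Aux

/-- The two-sided shift on `ℤ → Bool`. -/
def S : (ℤ → Bool) ≃ₜ (ℤ → Bool) where
  toFun f n := f (n + 1)
  invFun f n := f (n - 1)
  left_inv f := by funext n; simp
  right_inv f := by funext n; simp
  continuous_toFun := continuous_pi fun n => continuous_apply (n + 1)
  continuous_invFun := continuous_pi fun n => continuous_apply (n - 1)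

lemma S_iterate (m : ℕ) (f : ℤ → Bool) : (⇑S)^[m] f = fun n => f (n + (m : ℤ)) := by
  induction m with
  | zero => simp
  | succ m ih =>
    rw [Function.iterate_succ_apply', ih]
    funext n
    show f (n + 1 + (m : ℤ)) = f (n + ((m : ℕ) + 1 : ℕ))
    congr 1
    push_cast
    ring

/-- Density criterion in a product of discrete spaces. -/
lemma dense_crit {s : Set (ℤ → Bool)}
    (h : ∀ (f : ℤ → Bool) (F : Finset ℤ), ∃ g ∈ s, ∀ i ∈ F, g i = f i) : Dense s := by
  rw [(isTopologicalBasis_pi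
      (fun _ : ℤ => TopologicalSpace.isTopologicalBasis_opens)).dense_iff]
  rintro o ⟨U, F, hU, rfl⟩ ⟨f, hf⟩
  obtain ⟨g, hg, ha⟩ := h f F
  refine ⟨g, ?_, hg⟩
  rw [Set.mem_pi] at hf ⊢
  intro i hi
  rw [ha i hi]
  exact hf i hi

/-- The open sets whose intersection gives a totally transitive point. -/
def A (σ : Σ F : Finset ℤ, (↑F → Bool)) (k : ℕ) : Set (ℤ → Bool) :=
  ⋃ n : ℕ, {w | ∀ i : σ.1, w ((i : ℤ) + ((k : ℤ) + 1) * ((n : ℤ) + 1)) = σ.2 i}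

lemma isOpen_A (σ : Σ F : Finset ℤ, (↑F → Bool)) (k : ℕ) : IsOpen (A σ k) := by
  refine isOpen_iUnion fun n => ?_
  have : {w : ℤ → Bool | ∀ i : σ.1, w ((i : ℤ) + ((k : ℤ) + 1) * ((n : ℤ) + 1)) = σ.2 i}
      = ⋂ i : σ.1, (fun w : ℤ → Bool => w ((i : ℤ) + ((k : ℤ) + 1) * ((n : ℤ) + 1))) ⁻¹' {σ.2 i} := by
    ext w; simp [Set.mem_iInter]
  rw [this]
  exact isOpen_iInter_of_finite fun i =>
    (continuous_apply _).isOpen_preimage _ (isOpen_discrete _)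

lemma dense_A (σ : Σ F : Finset ℤ, (↑F → Bool)) (k : ℕ) : Dense (A σ k) := by
  apply dense_crit
  intro f F
  set a : ℕ := σ.1.sup fun i => i.natAbs with ha
  set b : ℕ := F.sup fun i => i.natAbs with hb
  set n : ℕ := a + b with hn
  set d : ℤ := ((k : ℤ) + 1) * ((n : ℤ) + 1) with hd
  have hdle : ((n : ℤ) + 1) ≤ d := by
    rw [hd]
    nlinarith [Int.natCast_nonneg k, Int.natCast_nonneg n]
  refine ⟨fun j => if h : (j - d) ∈ σ.1 then σ.2 ⟨j - d, h⟩ else f j, ?_, ?_⟩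
  · refine Set.mem_iUnion.2 ⟨n, ?_⟩
    intro i
    have e : ((i : ℤ) + d) - d = (i : ℤ) := by ring
    have hc : ((i : ℤ) + d) - d ∈ σ.1 := by rw [e]; exact i.2
    show (if h : ((i : ℤ) + d) - d ∈ σ.1 then σ.2 ⟨(i : ℤ) + d - d, h⟩ else f _) = σ.2 i
    rw [dif_pos hc]
    exact congrArg σ.2 (Subtype.ext e)
  · intro j hj
    have hbj : j.natAbs ≤ b := Finset.le_sup (f := fun i => i.natAbs) hj
    show (if h : j - d ∈ σ.1 then σ.2 ⟨j - d, h⟩ else f j) = f j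
    rw [dif_neg]
    intro hmem
    have haj : (j - d).natAbs ≤ a := Finset.le_sup (f := fun i => i.natAbs) hmem
    have : ((a : ℤ) + b + 1) ≤ d := by
      have : ((n : ℤ)) = (a : ℤ) + b := by push_cast [hn]; ring
      omega
    omega

/-- A totally transitive point for the shift, via Baire category. -/
lemma exists_W : ∃ W : ℤ → Bool, ∀ (k : ℕ) (f : ℤ → Bool) (F : Finset ℤ),
    ∃ n : ℕ, ∀ i ∈ F, W ((i : ℤ) + ((k : ℤ) + 1) * ((n : ℤ) + 1)) = f i := by
  have hdense : Dense (⋂ p : (Σ F : Finset ℤ, (↑F → Bool)) × ℕ, A p.1 p.2) :=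
    dense_iInter_of_isOpen (fun p => isOpen_A p.1 p.2) (fun p => dense_A p.1 p.2)
  obtain ⟨W, hW⟩ := hdense.nonempty
  refine ⟨W, fun k f F => ?_⟩
  have h := Set.mem_iInter.1 hW (⟨F, fun i => f i⟩, k)
  obtain ⟨n, hn⟩ := Set.mem_iUnion.1 h
  exact ⟨n, fun i hi => hn ⟨i, hi⟩⟩

lemma dense_periodic_Z :
    Dense {f : ℤ → Bool | ∃ m : ℕ, 0 < m ∧ (⇑S)^[m] f = f} := by
  apply dense_crit
  intro f F
  set a : ℕ := F.sup fun i => i.natAbs with ha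
  set N : ℕ := a + 1 with hN
  refine ⟨fun i => f ((i + (N : ℤ)) % (2 * (N : ℤ)) - N), ⟨2 * N, by omega, ?_⟩, ?_⟩
  · rw [S_iterate]
    funext n
    show f ((n + ((2 * N : ℕ) : ℤ) + N) % (2 * (N : ℤ)) - N) = _
    congr 2
    have e : n + ((2 * N : ℕ) : ℤ) + N = (n + N) + 2 * (N : ℤ) * 1 := by push_cast; ring
    rw [e, Int.add_mul_emod_self_left]
  · intro i hi
    have hbi : i.natAbs ≤ a := Finset.le_sup (f := fun j => j.natAbs) hi
    show f ((i + (N : ℤ)) % (2 * (N : ℤ)) - N) = f i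
    have h0 : (0 : ℤ) ≤ i + N := by omega
    have h1 : i + (N : ℤ) < 2 * N := by omega
    rw [Int.emod_eq_of_lt h0 h1]
    congr 1
    ring

/-- The identification of the two Cantor spaces. -/
def E : (ℕ → Bool) ≃ₜ (ℤ → Bool) :=
  Homeomorph.piCongrLeft (Y := fun _ : ℤ => Bool) ((Denumerable.eqv ℤ).symm)

/-- The conjugated shift on `ℕ → Bool`. -/
def φ₀ : (ℕ → Bool) ≃ₜ (ℕ → Bool) := E.trans (S.trans E.symm)

lemma φ₀_apply (x : ℕ → Bool) : φ₀ x = E.symm (S (E x)) := rfl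

lemma φ₀_iterate (m : ℕ) (x : ℕ → Bool) :
    (⇑φ₀)^[m] x = E.symm ((⇑S)^[m] (E x)) := by
  induction m with
  | zero => simp
  | succ m ih =>
    rw [Function.iterate_succ_apply', ih, Function.iterate_succ_apply', φ₀_apply,
      Homeomorph.apply_symm_apply]

lemma dense_preimage_homeo {X Y : Type*} [TopologicalSpace X] [TopologicalSpace Y]
    (e : X ≃ₜ Y) {s : Set Y} (h : Dense s) : Dense (⇑e ⁻¹' s) := by
  rw [dense_iff_closure_eq] at h ⊢
  rw [← e.preimage_closure, h, Set.preimage_univ]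

end Stmt16Aux

open Stmt16Aux

/-- The Cantor space `{0,1}^ℕ` admits a totally transitive homeomorphism with a fixed
point and a dense set of periodic points. -/
theorem stmt16 :
    ∃ φ : (ℕ → Bool) ≃ₜ (ℕ → Bool), (∃ x, φ x = x) ∧
      Dense {x : ℕ → Bool | ∃ m : ℕ, 0 < m ∧ (⇑φ)^[m] x = x} ∧
      ∃ w : ℕ → Bool, ∀ k : ℕ, 0 < k →
        Dense (Set.range fun n : ℕ => (⇑φ)^[k * (n + 1)] w) := by
  obtain ⟨W, hW⟩ := exists_W
  refine ⟨φ₀, ⟨E.symm (fun _ => false), ?_⟩, ?_, E.symm W, ?_⟩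
  · rw [φ₀_apply, Homeomorph.apply_symm_apply]
    congr 1
  · have heq : {x : ℕ → Bool | ∃ m : ℕ, 0 < m ∧ (⇑φ₀)^[m] x = x}
        = ⇑E ⁻¹' {f : ℤ → Bool | ∃ m : ℕ, 0 < m ∧ (⇑S)^[m] f = f} := by
      ext x
      simp only [Set.mem_setOf_eq, Set.mem_preimage]
      constructor
      · rintro ⟨m, hm, hx⟩
        refine ⟨m, hm, ?_⟩
        rw [φ₀_iterate] at hx
        have := congrArg (⇑E) hx
        rwa [Homeomorph.apply_symm_apply] at this
      · rintro ⟨m, hm, hx⟩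
        refine ⟨m, hm, ?_⟩
        rw [φ₀_iterate, hx, Homeomorph.symm_apply_apply]
    rw [heq]
    exact dense_preimage_homeo E dense_periodic_Z
  · intro k hk
    have hr : (Set.range fun n : ℕ => (⇑φ₀)^[k * (n + 1)] (E.symm W))
        = ⇑E ⁻¹' (Set.range fun n : ℕ => (⇑S)^[k * (n + 1)] W) := by
      ext x
      simp only [Set.mem_range, Set.mem_preimage]
      constructor
      · rintro ⟨n, rfl⟩
        refine ⟨n, ?_⟩
        rw [φ₀_iterate, Homeomorph.apply_symm_apply, Homeomorph.apply_symm_apply]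
      · rintro ⟨n, hn⟩
        refine ⟨n, ?_⟩
        rw [φ₀_iterate, Homeomorph.apply_symm_apply, hn, Homeomorph.symm_apply_apply]
    rw [hr]
    refine dense_preimage_homeo E ?_
    apply dense_crit
    intro f F
    obtain ⟨n, hn⟩ := hW (k - 1) f F
    refine ⟨_, ⟨n, rfl⟩, ?_⟩
    intro i hi
    show ((⇑S)^[k * (n + 1)] W) i = f i
    rw [S_iterate]
    have hc : ((i : ℤ) + (((k - 1 : ℕ) : ℤ) + 1) * ((n : ℤ) + 1))
        = (i : ℤ) + ((k * (n + 1) : ℕ) : ℤ) := by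
      have h1 : ((k - 1 : ℕ) : ℤ) = (k : ℤ) - 1 := by omega
      rw [h1]
      push_cast
      ring
    have := hn i hi
    rw [hc] at this
    exact this
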